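/- For every fixed constant d > 1 there exists L > 0 such that, with p = d/n, a.a.s. every connected set S ⊆ {1,…,n} of G_{n,p} with ln n ≤ |S| ≤ n satisfies d(S) ≤ L·|S|. -/

import Mathlib

open MeasureTheory Finset Filter

noncomputable section

attribute [local instance] Classical.propDecidable

/-- The Bernoulli measure on `Bool` with success probability `p` (truncated to `[0,1]`). -/
def bernoulliMeasure (p : ℝ) : Measure Bool :=
  (PMF.bernoulli (min (Real.toNNReal p) 1) (min_le_right _ _)).toMeasure

instance (p : ℝ) : IsProbabilityMeasure (bernoulliMeasure p) :=
  PMF.toMeasure.isProbabilityMeasure _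

/-- The Erdős–Rényi measure: each (ordered-pair-indexed) coordinate is an independent
Bernoulli(p); the graph only reads the coordinate `(min i j, max i j)`, so each of the
`n(n-1)/2` potential edges is present independently with probability `p`. -/
def gnp (n : ℕ) (p : ℝ) : Measure (Fin n → Fin n → Bool) :=
  Measure.pi fun _ => Measure.pi fun _ => bernoulliMeasure p

/-- The simple graph on `Fin n` determined by a sample point `ω`. -/
def graphOf {n : ℕ} (ω : Fin n → Fin n → Bool) : SimpleGraph (Fin n) where
  Adj i j := i ≠ j ∧ ω (min i j) (max i j) = true
  symm := by
    constructor
    intro i j h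
    exact ⟨h.1.symm, by rw [min_comm, max_comm]; exact h.2⟩
  loopless := by constructor; intro i h; exact h.1 rfl

/-- `d(S)`: the sum of the degrees of the vertices of `S`. -/
def degSum {V : Type*} (G : SimpleGraph V) (S : Finset V) : ℕ :=
  ∑ v ∈ S, (G.neighborSet v).ncard

/-- The sum of degrees over a set of vertices. -/
def degSumSet {V : Type*} (G : SimpleGraph V) (A : Set V) : ℕ :=
  ∑ᶠ v ∈ A, (G.neighborSet v).ncard

/-- `e(S)`: the number of edges with both endpoints in `S`. -/
def edgesIn {V : Type*} (G : SimpleGraph V) (S : Set V) : ℕ :=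
  {e ∈ G.edgeSet | ∀ v ∈ e, v ∈ S}.ncard

/-- `e^out(S)`: the number of edges with exactly one endpoint in `S`. -/
def edgesOut {V : Type*} (G : SimpleGraph V) (S : Set V) : ℕ :=
  {e ∈ G.edgeSet | (∃ v ∈ e, v ∈ S) ∧ (∃ v ∈ e, v ∉ S)}.ncard

/-- The number of edges with one endpoint in `A` and one in `B` (for disjoint `A`, `B`). -/
def edgesBetween {V : Type*} (G : SimpleGraph V) (A B : Set V) : ℕ :=
  {e ∈ G.edgeSet | ∃ v ∈ e, ∃ w ∈ e, v ∈ A ∧ w ∈ B}.ncard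

/-- A set of vertices is connected if the induced subgraph is connected. -/
def connSet {V : Type*} (G : SimpleGraph V) (S : Set V) : Prop :=
  (G.induce S).Connected

/-- `c` is a largest ("giant") connected component. -/
def isGiant {V : Type*} (G : SimpleGraph V) (c : G.ConnectedComponent) : Prop :=
  ∀ c' : G.ConnectedComponent, c'.supp.ncard ≤ c.supp.ncard

/-- Transition matrix of the simple random walk on `G`. -/
def transMatrix {V : Type*} (G : SimpleGraph V) : Matrix V V ℝ :=
  Matrix.of fun i j => if G.Adj i j then ((G.neighborSet i).ncard : ℝ)⁻¹ else 0

/-- Stationary distribution of the simple random walk on `G`: `π(v) = deg v / (2 |E|)`. -/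
def statDist {V : Type*} (G : SimpleGraph V) (v : V) : ℝ :=
  ((G.neighborSet v).ncard : ℝ) / (2 * (G.edgeSet.ncard : ℝ))

/-- Total variation distance between two (signed) distributions on a finite type. -/
def dTV {V : Type*} [Fintype V] (μ ν : V → ℝ) : ℝ :=
  ⨆ A : Finset V, |∑ v ∈ A, μ v - ∑ v ∈ A, ν v|

/-- `μ` is a probability distribution on the finite type `V`. -/
def IsProbDist {V : Type*} [Fintype V] (μ : V → ℝ) : Prop :=
  (∀ v, 0 ≤ μ v) ∧ ∑ v, μ v = 1

/-- `T_mix`: the supremum over initial distributions of the first time the walk is within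
`1/e` of `π` in total variation. -/
def mixTimeP {V : Type*} [Fintype V] [DecidableEq V] (P : Matrix V V ℝ) (pi : V → ℝ) : ℕ :=
  sSup {T : ℕ | ∃ μ, IsProbDist μ ∧
    T = sInf {t : ℕ | dTV (Matrix.vecMul μ (P ^ t)) pi < (Real.exp 1)⁻¹}}

/-- `T'_mix`: the averaged mixing time, using the Cesàro average `(1/t) ∑_{s<t} P^s`. -/
def avgMixTimeP {V : Type*} [Fintype V] [DecidableEq V] (P : Matrix V V ℝ) (pi : V → ℝ) : ℕ :=
  sSup {T : ℕ | ∃ μ, IsProbDist μ ∧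
    T = sInf {t : ℕ |
      dTV (Matrix.vecMul μ ((t : ℝ)⁻¹ • ∑ s ∈ Finset.range t, P ^ s)) pi < (Real.exp 1)⁻¹}}

/-- The mixing time of the simple random walk on the graph `G`. -/
def mixingTime {V : Type*} [Fintype V] [DecidableEq V] (G : SimpleGraph V) : ℕ :=
  mixTimeP (transMatrix G) (statDist G)

/-- The averaged mixing time of the simple random walk on the graph `G`. -/
def avgMixingTime {V : Type*} [Fintype V] [DecidableEq V] (G : SimpleGraph V) : ℕ :=
  avgMixTimeP (transMatrix G) (statDist G)

/-- `π(S)` for a finite Markov chain. -/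
def chainPi {V : Type*} [Fintype V] (pi : V → ℝ) (S : Finset V) : ℝ :=
  ∑ i ∈ S, pi i

/-- `Q(S) = ∑_{i ∈ S, j ∉ S} π(i) P(i,j)`. -/
def chainQ {V : Type*} [Fintype V] [DecidableEq V] (P : Matrix V V ℝ) (pi : V → ℝ)
    (S : Finset V) : ℝ :=
  ∑ i ∈ S, ∑ j ∈ Sᶜ, pi i * P i j

/-- The conductance `Φ(S) = Q(S)/(π(S) π(Sᶜ))`. -/
def chainPhi {V : Type*} [Fintype V] [DecidableEq V] (P : Matrix V V ℝ) (pi : V → ℝ)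
    (S : Finset V) : ℝ :=
  chainQ P pi S / (chainPi pi S * chainPi pi Sᶜ)

/-- The graph on the states with an edge between `i` and `j` when `P i j > 0`
(symmetrized). -/
def chainGraph {V : Type*} (P : Matrix V V ℝ) : SimpleGraph V where
  Adj i j := i ≠ j ∧ (0 < P i j ∨ 0 < P j i)
  symm := by
    constructor
    intro i j h
    exact ⟨h.1.symm, h.2.symm⟩
  loopless := by constructor; intro i h; exact h.1 rfl

/-- `Φ(x)`: the minimum conductance of a connected set `S` with `x/2 ≤ π(S) ≤ x`
(equal to `1` if no such set exists). -/
def PhiAt {V : Type*} [Fintype V] [DecidableEq V] (P : Matrix V V ℝ) (pi : V → ℝ)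
    (x : ℝ) : ℝ :=
  if ∃ S : Finset V, ((chainGraph P).induce (S : Set V)).Connected ∧
      x / 2 ≤ chainPi pi S ∧ chainPi pi S ≤ x then
    sInf {y : ℝ | ∃ S : Finset V, ((chainGraph P).induce (S : Set V)).Connected ∧
      x / 2 ≤ chainPi pi S ∧ chainPi pi S ≤ x ∧ y = chainPhi P pi S}
  else 1

/-- The minimum conductance `Φ(G)` of the simple random walk on `G`, over sets with
`0 < π(S) ≤ 1/2`. -/
def minConductance {V : Type*} [Fintype V] [DecidableEq V] (G : SimpleGraph V) : ℝ :=
  sInf {y : ℝ | ∃ S : Finset V, 0 < chainPi (statDist G) S ∧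
    chainPi (statDist G) S ≤ 1 / 2 ∧ y = chainPhi (transMatrix G) (statDist G) S}

/-- The vertex set of the core (maximal subgraph of minimum degree ≥ 2) of the induced
subgraph of `G` on `W`. -/
def coreWithin {V : Type*} (G : SimpleGraph V) (W : Set V) : Set V :=
  ⋃₀ {A : Set V | A ⊆ W ∧ ∀ v ∈ A, 2 ≤ (A ∩ G.neighborSet v).ncard}

/-- A dangling tree of `G` on vertex set `A` with root `r`: the induced subgraph on `A`
is a tree and every non-root vertex of `A` has all its `G`-neighbours inside `A`. -/
def IsDanglingTree {V : Type*} (G : SimpleGraph V) (A : Set V) (r : V) : Prop :=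
  r ∈ A ∧ (G.induce A).IsTree ∧ ∀ v ∈ A, v ≠ r → G.neighborSet v ⊆ A

lemma exists_adj_dist_lt {V : Type*} {G : SimpleGraph V} (hc : G.Connected) (r v : V)
    (hv : v ≠ r) : ∃ w, G.Adj v w ∧ G.dist w r < G.dist v r := by
  obtain ⟨p, hp⟩ := (hc v r).exists_walk_length_eq_dist
  cases p with
  | nil => exact absurd rfl hv
  | @cons _ w _ h q =>
    refine ⟨w, h, ?_⟩
    have h2 : G.dist w r ≤ q.length := SimpleGraph.dist_le q
    simp only [SimpleGraph.Walk.length_cons] at hp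
    omega

lemma pair_eq_of_minmax {α : Type*} [LinearOrder α] {a b c d : α}
    (h1 : min a b = min c d) (h2 : max a b = max c d) :
    (a = c ∧ b = d) ∨ (a = d ∧ b = c) := by
  rcases le_total a b with h | h <;> rcases le_total c d with h' | h'
  · rw [min_eq_left h, min_eq_left h'] at h1; rw [max_eq_right h, max_eq_right h'] at h2
    exact Or.inl ⟨h1, h2⟩
  · rw [min_eq_left h, min_eq_right h'] at h1; rw [max_eq_right h, max_eq_left h'] at h2
    exact Or.inr ⟨h1, h2⟩
  · rw [min_eq_right h, min_eq_left h'] at h1; rw [max_eq_left h, max_eq_right h'] at h2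
    exact Or.inr ⟨h2, h1⟩
  · rw [min_eq_right h, min_eq_right h'] at h1; rw [max_eq_left h, max_eq_left h'] at h2
    exact Or.inl ⟨h2, h1⟩

lemma exists_tree_edges {n : ℕ} (G : SimpleGraph (Fin n)) (S : Finset (Fin n))
    (hconn : (G.induce (↑S : Set (Fin n))).Connected) :
    ∃ E₁ : Finset (Fin n × Fin n), E₁.card = S.card - 1 ∧ E₁ ⊆ S ×ˢ S ∧
      ∀ c ∈ E₁, c.1 < c.2 ∧ G.Adj c.1 c.2 := by
  set H := G.induce (↑S : Set (Fin n)) with hH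
  obtain ⟨r⟩ := hconn.nonempty
  have hstep : ∀ v : ↥(↑S : Set (Fin n)), ∃ w,
      v ≠ r → H.Adj v w ∧ H.dist w r < H.dist v r := by
    intro v
    by_cases hv : v = r
    · exact ⟨r, fun h => absurd hv h⟩
    · obtain ⟨w, hw⟩ := exists_adj_dist_lt hconn r v hv
      exact ⟨w, fun _ => hw⟩
  choose F hF using hstep
  set e : ↥(↑S : Set (Fin n)) → Fin n × Fin n :=
    fun v => (min (↑v) (↑(F v)), max (↑v) (↑(F v))) with he
  have hadj : ∀ v : ↥(↑S : Set (Fin n)), v ≠ r → G.Adj ↑v ↑(F v) := by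
    intro v hv
    have := (hF v hv).1
    rwa [hH, SimpleGraph.comap_adj] at this
  refine ⟨Finset.image e (Finset.univ.filter (· ≠ r)), ?_, ?_, ?_⟩
  · rw [Finset.card_image_of_injOn]
    · rw [Finset.filter_ne', Finset.card_erase_of_mem (Finset.mem_univ r)]
      congr 1
      rw [Finset.card_univ]
      simp
    · intro v hv v' hv' hee
      simp only [Finset.mem_coe, Finset.mem_filter] at hv hv'
      rw [he] at hee
      simp only [Prod.mk.injEq] at hee
      rcases pair_eq_of_minmax hee.1 hee.2 with ⟨h1, h2⟩ | ⟨h1, h2⟩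
      · exact Subtype.ext h1
      · exfalso
        have hv1 := (hF v hv.2).2
        have hv2 := (hF v' hv'.2).2
        rw [← Subtype.ext h1] at hv2
        rw [Subtype.ext h2] at hv1
        omega
  · intro c hc
    simp only [Finset.mem_image, Finset.mem_filter] at hc
    obtain ⟨v, ⟨_, hvr⟩, rfl⟩ := hc
    have h1 : (↑v : Fin n) ∈ S := by simpa using v.2
    have h2 : (↑(F v) : Fin n) ∈ S := by simpa using (F v).2
    rw [Finset.mem_product]
    constructor
    · rcases min_cases (↑v : Fin n) ↑(F v) with ⟨h, _⟩ | ⟨h, _⟩ <;> rw [he] <;> simp only [h] <;>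
        assumption
    · rcases max_cases (↑v : Fin n) ↑(F v) with ⟨h, _⟩ | ⟨h, _⟩ <;> rw [he] <;> simp only [h] <;>
        assumption
  · intro c hc
    simp only [Finset.mem_image, Finset.mem_filter] at hc
    obtain ⟨v, ⟨_, hvr⟩, rfl⟩ := hc
    have hne : (↑v : Fin n) ≠ ↑(F v) := fun h => (hadj v hvr).ne h
    constructor
    · exact min_lt_max.mpr hne
    · rcases le_total (↑v : Fin n) ↑(F v) with h | h
      · rw [he]; simp only [min_eq_left h, max_eq_right h]; exact hadj v hvr
      · rw [he]; simp only [min_eq_right h, max_eq_left h]; exact (hadj v hvr).symm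

lemma deg_ncard_eq {n : ℕ} (G : SimpleGraph (Fin n)) (v : Fin n) :
    (G.neighborSet v).ncard = (Finset.univ.filter (fun w => G.Adj v w)).card := by
  rw [Set.ncard_eq_toFinset_card']
  congr 1
  ext w
  simp [SimpleGraph.neighborSet]
  exact Set.mem_toFinset

lemma degSum_le_two_mul_inc {n : ℕ} (G : SimpleGraph (Fin n)) (S : Finset (Fin n)) :
    ∑ v ∈ S, (G.neighborSet v).ncard ≤
      2 * (((S ×ˢ (Finset.univ : Finset (Fin n))) ∪ ((Finset.univ : Finset (Fin n)) ×ˢ S)).filter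
        (fun c => c.1 < c.2 ∧ G.Adj c.1 c.2)).card := by
  classical
  set Inc := (((S ×ˢ (Finset.univ : Finset (Fin n))) ∪ ((Finset.univ : Finset (Fin n)) ×ˢ S)).filter
        (fun c => c.1 < c.2 ∧ G.Adj c.1 c.2)) with hInc
  set P := (S ×ˢ (Finset.univ : Finset (Fin n))).filter (fun c => G.Adj c.1 c.2) with hP
  have h1 : ∑ v ∈ S, (G.neighborSet v).ncard = P.card := by
    have : P = S.biUnion (fun v => ({v} : Finset (Fin n)) ×ˢ Finset.univ.filter (fun w => G.Adj v w)) := by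
      ext c
      simp only [hP, Finset.mem_filter, Finset.mem_product, Finset.mem_biUnion,
        Finset.mem_singleton, Finset.mem_univ, true_and, and_true]
      constructor
      · exact fun h => ⟨c.1, h.1, rfl, h.2⟩
      · rintro ⟨v, hv, rfl, h⟩; exact ⟨hv, h⟩
    rw [this, Finset.card_biUnion]
    · refine Finset.sum_congr rfl fun v _ => ?_
      rw [deg_ncard_eq, Finset.singleton_product, Finset.card_map]
    · intro v _ v' _ hvv'
      simp only [Finset.disjoint_left]
      rintro c hc hc'
      simp only [Finset.mem_product, Finset.mem_singleton] at hc hc'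
      exact hvv' (hc.1 ▸ hc'.1 ▸ rfl)
  rw [h1]
  refine Finset.card_le_mul_card_image_of_maps_to (f := fun c => (min c.1 c.2, max c.1 c.2))
    ?_ 2 ?_
  · rintro ⟨a, b⟩ hc
    simp only [hP, Finset.mem_filter, Finset.mem_product, Finset.mem_univ, and_true] at hc
    obtain ⟨ha, hadj⟩ := hc
    have hne : a ≠ b := hadj.ne
    simp only [hInc, Finset.mem_filter, Finset.mem_union, Finset.mem_product, Finset.mem_univ,
      true_and, and_true]
    refine ⟨?_, min_lt_max.mpr hne, ?_⟩
    · rcases le_total a b with h | h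
      · exact Or.inl (by rw [min_eq_left h]; exact ha)
      · exact Or.inr (by rw [max_eq_left h]; exact ha)
    · rcases le_total a b with h | h
      · rw [min_eq_left h, max_eq_right h]; exact hadj
      · rw [min_eq_right h, max_eq_left h]; exact hadj.symm
  · intro b _
    have hsub : P.filter (fun c => (min c.1 c.2, max c.1 c.2) = b) ⊆ {(b.1, b.2), (b.2, b.1)} := by
      rintro ⟨a, a'⟩ hc
      simp only [Finset.mem_filter] at hc
      obtain ⟨-, heq⟩ := hc
      subst heq
      simp only [Finset.mem_insert, Finset.mem_singleton, Prod.mk.injEq]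
      rcases le_total a a' with h | h
      · exact Or.inl ⟨(min_eq_left h).symm, (max_eq_right h).symm⟩
      · exact Or.inr ⟨(max_eq_left h).symm, (min_eq_right h).symm⟩
    calc (P.filter (fun c => (min c.1 c.2, max c.1 c.2) = b)).card
        ≤ ({(b.1, b.2), (b.2, b.1)} : Finset (Fin n × Fin n)).card := Finset.card_le_card hsub
      _ ≤ 2 := Finset.card_insert_le _ _ |>.trans (by simp)

lemma gnp_cylinder (n : ℕ) (p : ℝ) (E : Finset (Fin n × Fin n)) :
    gnp n p {ω : Fin n → Fin n → Bool | ∀ c ∈ E, ω c.1 c.2 = true} =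
      (min (ENNReal.ofReal p) 1) ^ E.card := by
  set q := min (ENNReal.ofReal p) 1 with hq
  have hset : {ω : Fin n → Fin n → Bool | ∀ c ∈ E, ω c.1 c.2 = true} =
      Set.pi Set.univ (fun i => Set.pi Set.univ (fun j =>
        if (i, j) ∈ E then {x : Bool | x = true} else Set.univ)) := by
    ext ω
    simp only [Set.mem_setOf_eq, Set.mem_pi, Set.mem_univ, forall_true_left]
    constructor
    · intro h i j
      split_ifs with hij
      · exact h (i, j) hij
      · trivial
    · intro h c hc
      have h2 := h c.1 c.2
      rw [if_pos] at h2
      · exact h2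
      · exact hc
  rw [hset]
  show (Measure.pi fun _ => Measure.pi fun _ => bernoulliMeasure p) _ = _
  rw [Measure.pi_pi]
  have hinner : ∀ i : Fin n, (Measure.pi fun _ : Fin n => bernoulliMeasure p)
      (Set.pi Set.univ fun j => if (i, j) ∈ E then {x : Bool | x = true} else Set.univ) =
      ∏ j : Fin n, (if (i, j) ∈ E then q else 1) := by
    intro i
    rw [Measure.pi_pi]
    refine Finset.prod_congr rfl fun j _ => ?_
    split_ifs with hij
    · have h3 : {x : Bool | x = true} = ({true} : Set Bool) := by ext x; simp
      rw [h3, bernoulliMeasure, PMF.toMeasure_apply_singleton _ _ (measurableSet_singleton _)]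
      show ((min p.toNNReal 1 : NNReal) : ENNReal) = q
      rw [hq, ENNReal.coe_min, ENNReal.coe_one]; rfl
    · exact measure_univ
  simp_rw [hinner]
  rw [← Fintype.prod_prod_type']
  have h4 : ∀ c : Fin n × Fin n, (if (c.1, c.2) ∈ E then q else 1) = (if c ∈ E then q else 1) := by
    intro c; rfl
  simp_rw [h4]
  rw [Finset.prod_ite_mem, Finset.univ_inter, Finset.prod_const]

lemma meas_all {n : ℕ} (s : Set (Fin n → Fin n → Bool)) : MeasurableSet s :=
  s.to_countable.measurableSet

lemma bad_subset_witness {n : ℕ} (L k₀ : ℕ) (hL : 1 ≤ L) :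
    {ω : Fin n → Fin n → Bool | ∃ S : Finset (Fin n),
        connSet (graphOf ω) (S : Set (Fin n)) ∧ k₀ ≤ S.card ∧
        4 * L * S.card + 1 ≤ degSum (graphOf ω) S} ⊆
      ⋃ k ∈ Finset.Icc k₀ n, ⋃ S ∈ (Finset.univ : Finset (Fin n)).powersetCard k,
        ⋃ E₁ ∈ (S ×ˢ S).powersetCard (k - 1),
          ⋃ E₂ ∈ ((S ×ˢ Finset.univ ∪ Finset.univ ×ˢ S) \ E₁).powersetCard (L * k),
            {ω : Fin n → Fin n → Bool | ∀ c ∈ E₁ ∪ E₂, ω c.1 c.2 = true} := by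
  intro ω hω
  obtain ⟨S, hconn, hk₀, hdeg⟩ := hω
  set k := S.card with hk
  obtain ⟨E₁, hE₁card, hE₁sub, hE₁prop⟩ := exists_tree_edges (graphOf ω) S hconn
  set Inc := ((S ×ˢ (Finset.univ : Finset (Fin n)) ∪ Finset.univ ×ˢ S)).filter
    (fun c => c.1 < c.2 ∧ (graphOf ω).Adj c.1 c.2) with hIncDef
  have hIncE₁ : E₁ ⊆ Inc := by
    intro c hc
    obtain ⟨h1, h2⟩ := hE₁prop c hc
    rw [hIncDef, Finset.mem_filter]
    refine ⟨Finset.mem_union_left _ ?_, h1, h2⟩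
    exact Finset.product_subset_product_right (Finset.subset_univ _) (hE₁sub hc)
  have hdeg2 : degSum (graphOf ω) S ≤ 2 * Inc.card := degSum_le_two_mul_inc (graphOf ω) S
  have hInc : 2 * (L * k) + 1 ≤ Inc.card := by
    have hrw : 4 * L * k = 2 * (L * k) + 2 * (L * k) := by ring
    omega
  have hkLk : k ≤ L * k := Nat.le_mul_of_pos_left k hL
  have hsd : L * k ≤ (Inc \ E₁).card := by
    have h3 := Finset.le_card_sdiff E₁ Inc
    omega
  obtain ⟨E₂, hE₂sub, hE₂card⟩ := Finset.exists_subset_card_eq hsd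
  have hkn : k ≤ n := by
    have := Finset.card_le_univ S
    simpa using this
  simp only [Set.mem_iUnion]
  refine ⟨k, ?_, S, ?_, E₁, ?_, E₂, ?_, ?_⟩
  · exact Finset.mem_Icc.mpr ⟨hk₀, hkn⟩
  · exact Finset.mem_powersetCard.mpr ⟨Finset.subset_univ _, rfl⟩
  · exact Finset.mem_powersetCard.mpr ⟨hE₁sub, hE₁card⟩
  · refine Finset.mem_powersetCard.mpr ⟨?_, hE₂card⟩
    exact hE₂sub.trans (Finset.sdiff_subset_sdiff (Finset.filter_subset _ _) le_rfl)
  · intro c hc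
    have hok : c.1 < c.2 ∧ (graphOf ω).Adj c.1 c.2 := by
      rcases Finset.mem_union.mp hc with h | h
      · exact hE₁prop c h
      · have := (Finset.mem_sdiff.mp (hE₂sub h)).1
        rw [hIncDef, Finset.mem_filter] at this
        exact this.2
    obtain ⟨hlt, hadj⟩ := hok
    obtain ⟨-, htrue⟩ := hadj
    rwa [min_eq_left hlt.le, max_eq_right hlt.le] at htrue

lemma measure_bad_le {n : ℕ} (p : ℝ) (L k₀ : ℕ) (hL : 1 ≤ L) :
    gnp n p {ω : Fin n → Fin n → Bool | ∃ S : Finset (Fin n),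
        connSet (graphOf ω) (S : Set (Fin n)) ∧ k₀ ≤ S.card ∧
        4 * L * S.card + 1 ≤ degSum (graphOf ω) S} ≤
      ∑ k ∈ Finset.Icc k₀ n,
        (((n.choose k) * ((k * k).choose (k - 1)) * ((2 * (k * n)).choose (L * k)) : ℕ) :
            ENNReal) *
          (min (ENNReal.ofReal p) 1) ^ ((k - 1) + L * k) := by
  refine le_trans (measure_mono (bad_subset_witness L k₀ hL)) ?_
  refine le_trans (measure_biUnion_finset_le _ _) ?_
  refine Finset.sum_le_sum fun k hk => ?_
  refine le_trans (measure_biUnion_finset_le _ _) ?_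
  have hq1 : ∀ S ∈ (Finset.univ : Finset (Fin n)).powersetCard k,
      gnp n p (⋃ E₁ ∈ (S ×ˢ S).powersetCard (k - 1),
          ⋃ E₂ ∈ ((S ×ˢ Finset.univ ∪ Finset.univ ×ˢ S) \ E₁).powersetCard (L * k),
            {ω : Fin n → Fin n → Bool | ∀ c ∈ E₁ ∪ E₂, ω c.1 c.2 = true}) ≤
        ((((k * k).choose (k - 1)) * ((2 * (k * n)).choose (L * k)) : ℕ) : ENNReal) *
          (min (ENNReal.ofReal p) 1) ^ ((k - 1) + L * k) := by
    intro S hS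
    have hScard : S.card = k := (Finset.mem_powersetCard.mp hS).2
    refine le_trans (measure_biUnion_finset_le _ _) ?_
    have hq2 : ∀ E₁ ∈ (S ×ˢ S).powersetCard (k - 1),
        gnp n p (⋃ E₂ ∈ ((S ×ˢ Finset.univ ∪ Finset.univ ×ˢ S) \ E₁).powersetCard (L * k),
            {ω : Fin n → Fin n → Bool | ∀ c ∈ E₁ ∪ E₂, ω c.1 c.2 = true}) ≤
          ((((2 * (k * n)).choose (L * k)) : ℕ) : ENNReal) *
            (min (ENNReal.ofReal p) 1) ^ ((k - 1) + L * k) := by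
      intro E₁ hE₁
      have hE₁card : E₁.card = k - 1 := (Finset.mem_powersetCard.mp hE₁).2
      refine le_trans (measure_biUnion_finset_le _ _) ?_
      have hq3 : ∀ E₂ ∈ ((S ×ˢ Finset.univ ∪ Finset.univ ×ˢ S) \ E₁).powersetCard (L * k),
          gnp n p {ω : Fin n → Fin n → Bool | ∀ c ∈ E₁ ∪ E₂, ω c.1 c.2 = true} =
            (min (ENNReal.ofReal p) 1) ^ ((k - 1) + L * k) := by
        intro E₂ hE₂
        obtain ⟨hE₂sub, hE₂card⟩ := Finset.mem_powersetCard.mp hE₂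
        rw [gnp_cylinder]
        congr 1
        rw [Finset.card_union_of_disjoint, hE₁card, hE₂card]
        exact Finset.disjoint_left.mpr fun c hc hc2 => (Finset.mem_sdiff.mp (hE₂sub hc2)).2 hc
      calc ∑ E₂ ∈ ((S ×ˢ Finset.univ ∪ Finset.univ ×ˢ S) \ E₁).powersetCard (L * k),
            gnp n p {ω : Fin n → Fin n → Bool | ∀ c ∈ E₁ ∪ E₂, ω c.1 c.2 = true}
          = ∑ _E₂ ∈ ((S ×ˢ Finset.univ ∪ Finset.univ ×ˢ S) \ E₁).powersetCard (L * k),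
            (min (ENNReal.ofReal p) 1) ^ ((k - 1) + L * k) := Finset.sum_congr rfl hq3
        _ = (((S ×ˢ Finset.univ ∪ Finset.univ ×ˢ S) \ E₁).powersetCard (L * k)).card •
            (min (ENNReal.ofReal p) 1) ^ ((k - 1) + L * k) := Finset.sum_const _
        _ ≤ ((((2 * (k * n)).choose (L * k)) : ℕ) : ENNReal) *
            (min (ENNReal.ofReal p) 1) ^ ((k - 1) + L * k) := by
            rw [nsmul_eq_mul]
            refine mul_le_mul' ?_ le_rfl
            rw [Finset.card_powersetCard]
            refine Nat.cast_le.mpr (Nat.choose_le_choose _ ?_)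
            calc ((S ×ˢ Finset.univ ∪ Finset.univ ×ˢ S) \ E₁).card
                ≤ (S ×ˢ (Finset.univ : Finset (Fin n)) ∪ Finset.univ ×ˢ S).card :=
                  Finset.card_le_card (Finset.sdiff_subset)
              _ ≤ (S ×ˢ (Finset.univ : Finset (Fin n))).card +
                  ((Finset.univ : Finset (Fin n)) ×ˢ S).card := Finset.card_union_le _ _
              _ ≤ 2 * (k * n) := by
                  rw [Finset.card_product, Finset.card_product, Finset.card_univ,
                    Fintype.card_fin, hScard]
                  exact le_of_eq (by ring)
    calc ∑ E₁ ∈ (S ×ˢ S).powersetCard (k - 1), gnp n p _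
        ≤ ∑ _E₁ ∈ (S ×ˢ S).powersetCard (k - 1),
          ((((2 * (k * n)).choose (L * k)) : ℕ) : ENNReal) *
            (min (ENNReal.ofReal p) 1) ^ ((k - 1) + L * k) := Finset.sum_le_sum hq2
      _ = ((S ×ˢ S).powersetCard (k - 1)).card •
          (((((2 * (k * n)).choose (L * k)) : ℕ) : ENNReal) *
            (min (ENNReal.ofReal p) 1) ^ ((k - 1) + L * k)) := Finset.sum_const _
      _ ≤ ((((k * k).choose (k - 1)) * ((2 * (k * n)).choose (L * k)) : ℕ) : ENNReal) *
          (min (ENNReal.ofReal p) 1) ^ ((k - 1) + L * k) := by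
          refine le_of_eq ?_
          rw [nsmul_eq_mul, Finset.card_powersetCard, Finset.card_product, hScard]
          push_cast
          ring
  calc ∑ S ∈ (Finset.univ : Finset (Fin n)).powersetCard k, gnp n p _
      ≤ ∑ _S ∈ (Finset.univ : Finset (Fin n)).powersetCard k,
        ((((k * k).choose (k - 1)) * ((2 * (k * n)).choose (L * k)) : ℕ) : ENNReal) *
          (min (ENNReal.ofReal p) 1) ^ ((k - 1) + L * k) := Finset.sum_le_sum hq1
    _ = ((Finset.univ : Finset (Fin n)).powersetCard k).card •
        (((((k * k).choose (k - 1)) * ((2 * (k * n)).choose (L * k)) : ℕ) : ENNReal) *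
          (min (ENNReal.ofReal p) 1) ^ ((k - 1) + L * k)) := Finset.sum_const _
    _ ≤ (((n.choose k) * ((k * k).choose (k - 1)) * ((2 * (k * n)).choose (L * k)) : ℕ) :
          ENNReal) * (min (ENNReal.ofReal p) 1) ^ ((k - 1) + L * k) := by
        refine le_of_eq ?_
        rw [nsmul_eq_mul, Finset.card_powersetCard, Finset.card_univ, Fintype.card_fin]
        push_cast
        ring

lemma pow_div_factorial_le_exp {x : ℝ} (hx : 0 ≤ x) (j : ℕ) :
    x ^ j / (j.factorial : ℝ) ≤ Real.exp x := by
  refine le_trans ?_ (Real.sum_le_exp_of_nonneg hx (j + 1))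
  refine Finset.single_le_sum (f := fun i => x ^ i / (i.factorial : ℝ)) ?_
    (Finset.self_mem_range_succ j)
  intro i _
  positivity

lemma term_bound (d : ℝ) (hd : 1 ≤ d) (L n k : ℕ) (hL : 1 ≤ L) (hk : 1 ≤ k)
    (hkn : k ≤ n) :
    ((n.choose k : ℕ) : ℝ) * (((k * k).choose (k - 1) : ℕ) : ℝ) *
        (((2 * (k * n)).choose (L * k) : ℕ) : ℝ) * (d / n) ^ ((k - 1) + L * k) ≤
      (n : ℝ) * (Real.exp 2 * d) ^ k * (2 * d * Real.exp 1 / L) ^ (L * k) := by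
  obtain ⟨m, rfl⟩ : ∃ m, k = m + 1 := ⟨k - 1, by omega⟩
  simp only [Nat.add_sub_cancel]
  set k := m + 1 with hkdef
  have hn0 : (0 : ℝ) < n := by
    have : 1 ≤ n := le_trans hk hkn
    exact_mod_cast Nat.lt_of_lt_of_le Nat.zero_lt_one this
  have hd0 : (0 : ℝ) < d := lt_of_lt_of_le one_pos hd
  have hL0 : (0 : ℝ) < L := by exact_mod_cast hL
  have hk0 : (0 : ℝ) < k := by positivity
  have hp0 : (0 : ℝ) ≤ d / n := by positivity
  have a1 : ((n.choose k : ℕ) : ℝ) ≤ (n : ℝ) ^ k / (k.factorial : ℝ) := by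
    exact_mod_cast Nat.choose_le_pow_div k n
  have a2 : (((k * k).choose m : ℕ) : ℝ) ≤ ((k : ℝ) * k) ^ m / (m.factorial : ℝ) := by
    have := Nat.choose_le_pow_div (α := ℝ) m (k * k)
    push_cast at this ⊢
    exact this
  have a3 : (((2 * (k * n)).choose (L * k) : ℕ) : ℝ) ≤
      (2 * ((k : ℝ) * n)) ^ (L * k) / ((L * k).factorial : ℝ) := by
    have := Nat.choose_le_pow_div (α := ℝ) (L * k) (2 * (k * n))
    push_cast at this ⊢
    exact this
  have step1 : ((n.choose k : ℕ) : ℝ) * (((k * k).choose m : ℕ) : ℝ) *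
      (((2 * (k * n)).choose (L * k) : ℕ) : ℝ) * (d / n) ^ (m + L * k) ≤
      ((n : ℝ) ^ k / (k.factorial : ℝ)) * (((k : ℝ) * k) ^ m / (m.factorial : ℝ)) *
        ((2 * ((k : ℝ) * n)) ^ (L * k) / ((L * k).factorial : ℝ)) * (d / n) ^ (m + L * k) := by
    gcongr <;> positivity
  refine le_trans step1 ?_
  have eqA : ((n : ℝ) ^ k / (k.factorial : ℝ)) * (((k : ℝ) * k) ^ m / (m.factorial : ℝ)) *
      ((2 * ((k : ℝ) * n)) ^ (L * k) / ((L * k).factorial : ℝ)) * (d / n) ^ (m + L * k) =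
      (n : ℝ) * d ^ m *
        ((k : ℝ) ^ (2 * m) / ((k.factorial : ℝ) * (m.factorial : ℝ))) *
        ((2 * d * k) ^ (L * k) / ((L * k).factorial : ℝ)) := by
    rw [div_pow]
    have hkf : (k.factorial : ℝ) ≠ 0 := by positivity
    have hmf : (m.factorial : ℝ) ≠ 0 := by positivity
    have hLf : (((L * k).factorial : ℕ) : ℝ) ≠ 0 := by positivity
    have hnne : (n : ℝ) ≠ 0 := ne_of_gt hn0
    field_simp
    ring
  rw [eqA]
  have d1 : (k : ℝ) ^ (2 * m) / ((k.factorial : ℝ) * (m.factorial : ℝ)) ≤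
      Real.exp k * Real.exp k := by
    have h1 : (k : ℝ) ^ (2 * m) ≤ (k : ℝ) ^ k * (k : ℝ) ^ m := by
      rw [← pow_add]
      have : (1 : ℝ) ≤ (k : ℝ) := by exact_mod_cast hk
      exact pow_le_pow_right₀ this (by omega)
    calc (k : ℝ) ^ (2 * m) / ((k.factorial : ℝ) * (m.factorial : ℝ))
        ≤ ((k : ℝ) ^ k * (k : ℝ) ^ m) / ((k.factorial : ℝ) * (m.factorial : ℝ)) := by
          gcongr
      _ = ((k : ℝ) ^ k / (k.factorial : ℝ)) * ((k : ℝ) ^ m / (m.factorial : ℝ)) := by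
          rw [div_mul_div_comm]
      _ ≤ Real.exp k * Real.exp k := by
          have b1 := pow_div_factorial_le_exp (x := (k : ℝ)) (by positivity) k
          have b2 := pow_div_factorial_le_exp (x := (k : ℝ)) (by positivity) m
          exact mul_le_mul b1 b2 (by positivity) (Real.exp_pos _).le
  have d2 : (2 * d * (k : ℝ)) ^ (L * k) / ((L * k).factorial : ℝ) ≤
      (2 * d / L) ^ (L * k) * Real.exp (L * k) := by
    have hrw : (2 * d * (k : ℝ)) = (2 * d / L) * ((L * k : ℕ) : ℝ) := by
      push_cast
      field_simp
    rw [hrw, mul_pow, mul_div_assoc]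
    refine mul_le_mul_of_nonneg_left ?_ (by positivity)
    have := pow_div_factorial_le_exp (x := (((L * k : ℕ)) : ℝ)) (by positivity) (L * k)
    convert this using 2
    · rfl
    · push_cast
      ring
  have e1 : (Real.exp 2) ^ k = Real.exp k * Real.exp k := by
    rw [← Real.exp_nat_mul, ← Real.exp_add]
    congr 1
    ring
  have e2 : (2 * d * Real.exp 1 / (L : ℝ)) ^ (L * k) =
      (2 * d / L) ^ (L * k) * Real.exp (L * k) := by
    have : (2 * d * Real.exp 1 / (L : ℝ)) = (2 * d / L) * Real.exp 1 := by ring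
    rw [this, mul_pow, ← Real.exp_nat_mul, mul_one]
    push_cast
    ring_nf
  calc (n : ℝ) * d ^ m * ((k : ℝ) ^ (2 * m) / ((k.factorial : ℝ) * (m.factorial : ℝ))) *
        ((2 * d * k) ^ (L * k) / ((L * k).factorial : ℝ))
      ≤ (n : ℝ) * d ^ m * (Real.exp k * Real.exp k) *
        ((2 * d / L) ^ (L * k) * Real.exp (L * k)) := by
        gcongr <;> positivity
    _ ≤ (n : ℝ) * d ^ k * (Real.exp k * Real.exp k) *
        ((2 * d / L) ^ (L * k) * Real.exp (L * k)) := by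
        have : d ^ m ≤ d ^ k := pow_le_pow_right₀ hd (by omega)
        gcongr
    _ = (n : ℝ) * (Real.exp 2 * d) ^ k * (2 * d * Real.exp 1 / L) ^ (L * k) := by
        rw [mul_pow, e1, e2]
        ring

lemma L_choice (d : ℝ) (hd : 1 ≤ d) :
    ∃ L : ℕ, 1 ≤ L ∧ (Real.exp 2 * d) * (2 * d * Real.exp 1 / L) ^ L ≤ Real.exp (-3) := by
  set L : ℕ := ⌈2 * d * Real.exp 3⌉₊ + 5 with hLdef
  have hd0 : (0 : ℝ) < d := lt_of_lt_of_le one_pos hd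
  have he3 : (1 : ℝ) ≤ Real.exp 3 := Real.one_le_exp (by norm_num)
  have hL1 : 1 ≤ L := by omega
  have hLge : 2 * d * Real.exp 3 ≤ (L : ℝ) := by
    refine le_trans (Nat.le_ceil _) ?_
    rw [hLdef]
    push_cast
    linarith
  have hL0 : (0 : ℝ) < L := by
    have : (0 : ℝ) < 2 * d * Real.exp 3 := by positivity
    linarith
  refine ⟨L, hL1, ?_⟩
  have h1 : 2 * d * Real.exp 1 / (L : ℝ) ≤ Real.exp (-2) := by
    rw [div_le_iff₀ hL0]
    have hee : Real.exp (-2) * Real.exp 3 = Real.exp 1 := by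
      rw [← Real.exp_add]; norm_num
    have this : Real.exp (-2) * (2 * d * Real.exp 3) = 2 * d * Real.exp 1 := by
      calc Real.exp (-2) * (2 * d * Real.exp 3) = 2 * d * (Real.exp (-2) * Real.exp 3) := by ring
        _ = 2 * d * Real.exp 1 := by rw [hee]
    calc 2 * d * Real.exp 1 = Real.exp (-2) * (2 * d * Real.exp 3) := this.symm
      _ ≤ Real.exp (-2) * L := by
        refine mul_le_mul_of_nonneg_left hLge (Real.exp_pos _).le
  have h2 : (2 * d * Real.exp 1 / (L : ℝ)) ^ L ≤ Real.exp (-2) ^ L :=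
    pow_le_pow_left₀ (by positivity) h1 L
  have h3 : Real.exp (-2) ^ L = Real.exp (-(2 * L)) := by
    rw [← Real.exp_nat_mul]
    congr 1
    ring
  have hL5 : (5 : ℝ) ≤ (L : ℝ) := by exact_mod_cast (by omega : 5 ≤ L)
  have hdL : d ≤ Real.exp (2 * (L : ℝ) - 5) := by
    rw [← Real.log_le_iff_le_exp hd0]
    have hlog : Real.log d ≤ d - 1 := Real.log_le_sub_one_of_pos hd0
    have : d ≤ (L : ℝ) := by
      calc d = 2 * d * 1 / 2 := by ring
        _ ≤ 2 * d * Real.exp 3 := by nlinarith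
        _ ≤ (L : ℝ) := hLge
    linarith
  calc (Real.exp 2 * d) * (2 * d * Real.exp 1 / L) ^ L
      ≤ (Real.exp 2 * Real.exp (2 * (L : ℝ) - 5)) * Real.exp (-(2 * L)) := by
        rw [h3] at h2
        have hnn : (0:ℝ) ≤ Real.exp (-(2*(L:ℝ))) := (Real.exp_pos _).le
        have := mul_le_mul (mul_le_mul_of_nonneg_left hdL (Real.exp_pos 2).le) h2
          (by positivity) (by positivity)
        exact this
    _ = Real.exp (-3) := by
        rw [← Real.exp_add, ← Real.exp_add]
        congr 1
        ring

lemma sum_bound (d : ℝ) (hd : 1 ≤ d) (L : ℕ) (hL : 1 ≤ L)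
    (hLc : (Real.exp 2 * d) * (2 * d * Real.exp 1 / L) ^ L ≤ Real.exp (-3))
    (n : ℕ) (hn : 8 ≤ n) (hdn : d ≤ n)
    (hterm : ∀ k, 1 ≤ k → k ≤ n →
      ((n.choose k : ℕ) : ℝ) * (((k * k).choose (k - 1) : ℕ) : ℝ) *
        (((2 * (k * n)).choose (L * k) : ℕ) : ℝ) * (d / n) ^ ((k - 1) + L * k) ≤
      (n : ℝ) * (Real.exp 2 * d) ^ k * (2 * d * Real.exp 1 / L) ^ (L * k)) :
    ∑ k ∈ Finset.Icc (⌈Real.log n⌉₊) n,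
      (((n.choose k) * ((k * k).choose (k - 1)) * ((2 * (k * n)).choose (L * k)) : ℕ) : ℝ) *
        (d / n) ^ ((k - 1) + L * k) ≤ 2 / n := by
  have hn0 : (0 : ℝ) < n := by positivity
  have hn1 : (1 : ℝ) ≤ n := by exact_mod_cast le_trans (by norm_num) hn
  set k₀ := ⌈Real.log n⌉₊ with hk₀
  have hlogn : Real.log n ≤ (k₀ : ℝ) := Nat.le_ceil _
  have hk₀1 : 1 ≤ k₀ := by
    rw [hk₀]
    refine Nat.one_le_ceil_iff.mpr ?_
    refine Real.log_pos ?_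
    exact_mod_cast lt_of_lt_of_le (by norm_num) hn
  have key : ∀ k ∈ Finset.Icc k₀ n,
      (((n.choose k) * ((k * k).choose (k - 1)) * ((2 * (k * n)).choose (L * k)) : ℕ) : ℝ) *
        (d / n) ^ ((k - 1) + L * k) ≤ (n : ℝ) / (n : ℝ) ^ 3 := by
    intro k hk
    rw [Finset.mem_Icc] at hk
    have hk1 : 1 ≤ k := le_trans hk₀1 hk.1
    have step := hterm k hk1 hk.2
    have step2 : (n : ℝ) * (Real.exp 2 * d) ^ k * (2 * d * Real.exp 1 / L) ^ (L * k) ≤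
        (n : ℝ) * Real.exp (-3 * k) := by
      have hrg : (Real.exp 2 * d) ^ k * (2 * d * Real.exp 1 / L) ^ (L * k) =
          ((Real.exp 2 * d) * (2 * d * Real.exp 1 / L) ^ L) ^ k := by
        rw [pow_mul, ← mul_pow]
      rw [mul_assoc, hrg]
      have h5 : ((Real.exp 2 * d) * (2 * d * Real.exp 1 / L) ^ L) ^ k ≤
          (Real.exp (-3)) ^ k := by
        refine pow_le_pow_left₀ ?_ hLc k
        positivity
      have h6 : (Real.exp (-3)) ^ k = Real.exp (-3 * k) := by
        rw [← Real.exp_nat_mul]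
        congr 1
        ring
      rw [← h6]
      exact mul_le_mul_of_nonneg_left h5 hn0.le
    have step3 : Real.exp (-3 * k) ≤ ((n : ℝ) ^ 3)⁻¹ := by
      have hkk : Real.log n ≤ (k : ℝ) := le_trans hlogn (by exact_mod_cast hk.1)
      have : Real.exp (-3 * k) ≤ Real.exp (-3 * Real.log n) := by
        rw [Real.exp_le_exp]
        nlinarith [Real.log_nonneg hn1]
      refine le_trans this ?_
      rw [show (-3 : ℝ) * Real.log n = -(Real.log n + Real.log n + Real.log n) by ring,
        Real.exp_neg, Real.exp_add, Real.exp_add, Real.exp_log hn0]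
      rw [show (n:ℝ)^3 = n * n * n by ring]
    have final : (n : ℝ) * Real.exp (-3 * k) ≤ (n : ℝ) / (n : ℝ) ^ 3 := by
      rw [div_eq_mul_inv]
      exact mul_le_mul_of_nonneg_left step3 hn0.le
    push_cast at step ⊢
    linarith
  calc ∑ k ∈ Finset.Icc k₀ n,
        (((n.choose k) * ((k * k).choose (k - 1)) * ((2 * (k * n)).choose (L * k)) : ℕ) : ℝ) *
          (d / n) ^ ((k - 1) + L * k)
      ≤ ∑ _k ∈ Finset.Icc k₀ n, (n : ℝ) / (n : ℝ) ^ 3 := Finset.sum_le_sum key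
    _ = ((Finset.Icc k₀ n).card : ℝ) * ((n : ℝ) / (n : ℝ) ^ 3) := by
        rw [Finset.sum_const, nsmul_eq_mul]
    _ ≤ (n + 1 : ℝ) * ((n : ℝ) / (n : ℝ) ^ 3) := by
        refine mul_le_mul_of_nonneg_right ?_ (by positivity)
        have hc : (Finset.Icc k₀ n).card ≤ n + 1 := by rw [Nat.card_Icc]; omega
        exact_mod_cast hc
    _ ≤ 2 / n := by
        have heq : (n + 1 : ℝ) * ((n : ℝ) / (n : ℝ) ^ 3) = ((n : ℝ) + 1) / (n : ℝ) ^ 2 := by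
          field_simp
        rw [heq, div_le_div_iff₀ (by positivity) hn0]
        have h8 : (8 : ℝ) ≤ n := by exact_mod_cast hn
        nlinarith


theorem total_degree_connected_sets' (d : ℝ) (hd : 1 < d) :
    ∃ L : ℝ, 0 < L ∧
      Tendsto (fun n : ℕ =>
        gnp n (d / n) {ω | ∀ S : Finset (Fin n), connSet (graphOf ω) (S : Set (Fin n)) →
          Real.log n ≤ (S.card : ℝ) → (S.card : ℝ) ≤ n →
          (degSum (graphOf ω) S : ℝ) ≤ L * S.card})
        atTop (nhds 1) := by
  obtain ⟨L, hL1, hLc⟩ := L_choice d hd.le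
  have hprob : ∀ (n : ℕ) (p : ℝ), IsProbabilityMeasure (gnp n p) := fun n p => by
    unfold gnp; infer_instance
  refine ⟨((4 * L : ℕ) : ℝ), by exact_mod_cast (by omega : 0 < 4 * L), ?_⟩
  set good : ∀ n : ℕ, Set (Fin n → Fin n → Bool) := fun n =>
    {ω | ∀ S : Finset (Fin n), connSet (graphOf ω) (S : Set (Fin n)) →
      Real.log n ≤ (S.card : ℝ) → (S.card : ℝ) ≤ n →
      (degSum (graphOf ω) S : ℝ) ≤ ((4 * L : ℕ) : ℝ) * S.card} with hgood
  have hupper : ∀ n : ℕ, gnp n (d / n) (good n) ≤ 1 := fun n =>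
    haveI := hprob n (d / n); prob_le_one
  have hlower : ∀ n : ℕ, 8 ≤ n → d ≤ (n : ℝ) →
      1 - ENNReal.ofReal (2 / n) ≤ gnp n (d / n) (good n) := by
    intro n hn8 hdn
    haveI := hprob n (d / n)
    have hn0 : (0 : ℝ) < n := by positivity
    have hp0 : 0 ≤ d / n := by positivity
    set bad : Set (Fin n → Fin n → Bool) :=
      {ω | ∃ S : Finset (Fin n), connSet (graphOf ω) (S : Set (Fin n)) ∧
        (⌈Real.log n⌉₊ : ℕ) ≤ S.card ∧ 4 * L * S.card + 1 ≤ degSum (graphOf ω) S} with hbaddef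
    have hsub : (good n)ᶜ ⊆ bad := by
      intro ω hω
      simp only [hgood, Set.mem_compl_iff, Set.mem_setOf_eq] at hω
      push_neg at hω
      obtain ⟨S, h1, h2, h3, h4⟩ := hω
      refine ⟨S, h1, Nat.ceil_le.mpr h2, ?_⟩
      have hlt : ((4 * L * S.card : ℕ) : ℝ) < (degSum (graphOf ω) S : ℝ) := by
        push_cast
        push_cast at h4
        linarith
      exact_mod_cast Nat.succ_le_of_lt (by exact_mod_cast hlt)
    have hbad : gnp n (d / n) bad ≤ ENNReal.ofReal (2 / n) := by
      refine le_trans (measure_bad_le (d / n) L ⌈Real.log n⌉₊ hL1) ?_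
      have hterm₂ : ∀ k ∈ Finset.Icc (⌈Real.log n⌉₊) n,
          (((n.choose k) * ((k * k).choose (k - 1)) * ((2 * (k * n)).choose (L * k)) : ℕ) :
              ENNReal) * (min (ENNReal.ofReal (d / n)) 1) ^ ((k - 1) + L * k) ≤
          ENNReal.ofReal
            ((((n.choose k) * ((k * k).choose (k - 1)) * ((2 * (k * n)).choose (L * k)) : ℕ) :
              ℝ) * (d / n) ^ ((k - 1) + L * k)) := by
        intro k _
        rw [ENNReal.ofReal_mul (by positivity), ENNReal.ofReal_pow hp0,
          ENNReal.ofReal_natCast]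
        exact mul_le_mul' le_rfl (pow_le_pow_left' (min_le_left _ _) _)
      refine le_trans (Finset.sum_le_sum hterm₂) ?_
      rw [← ENNReal.ofReal_sum_of_nonneg (fun k _ => by positivity)]
      refine ENNReal.ofReal_le_ofReal ?_
      refine sum_bound d hd.le L hL1 hLc n hn8 hdn ?_
      intro k hk1 hkn
      exact term_bound d hd.le L n k hL1 hk1 hkn
    have hcompl : gnp n (d / n) (good n) = 1 - gnp n (d / n) ((good n)ᶜ) := by
      rw [← prob_compl_eq_one_sub (meas_all _), compl_compl]
    rw [hcompl]
    exact tsub_le_tsub_left (le_trans (measure_mono hsub) hbad) 1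
  have hg : Tendsto (fun n : ℕ => 1 - ENNReal.ofReal (2 / n)) atTop (nhds 1) := by
    have h0 : Tendsto (fun n : ℕ => ENNReal.ofReal (2 / n)) atTop (nhds 0) := by
      have := ENNReal.tendsto_ofReal (tendsto_const_div_atTop_nhds_zero_nat 2)
      simpa using this
    have := (ENNReal.continuous_sub_left (by norm_num : (1 : ENNReal) ≠ ⊤)).continuousAt
      |>.tendsto.comp h0
    rw [tsub_zero] at this
    exact this
  refine tendsto_of_tendsto_of_tendsto_of_le_of_le' hg tendsto_const_nhds ?_ ?_
  · rw [Filter.eventually_atTop]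
    refine ⟨max 8 ⌈d⌉₊, fun n hn => ?_⟩
    have h8 : 8 ≤ n := le_trans (le_max_left _ _) hn
    have hdn : d ≤ (n : ℝ) := by
      refine le_trans (Nat.le_ceil d) ?_
      exact_mod_cast le_trans (le_max_right _ _) hn
    exact hlower n h8 hdn
  · exact Filter.Eventually.of_forall hupper

/-- For every fixed `d > 1` there is `L > 0` such that with `p = d/n`,
a.a.s. every connected set `S` with `ln n ≤ |S| ≤ n` satisfies `d(S) ≤ L |S|`. -/
theorem total_degree_connected_sets (d : ℝ) (hd : 1 < d) :
    ∃ L : ℝ, 0 < L ∧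
      Tendsto (fun n : ℕ =>
        gnp n (d / n) {ω | ∀ S : Finset (Fin n), connSet (graphOf ω) (S : Set (Fin n)) →
          Real.log n ≤ (S.card : ℝ) → (S.card : ℝ) ≤ n →
          (degSum (graphOf ω) S : ℝ) ≤ L * S.card})
        atTop (nhds 1) :=
  total_degree_connected_sets' d hd

end
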